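/- Let (f_n) be a sequence of functions from ℝ to [0,1] such that each f_n is strictly decreasing with limit 1 at -∞ and 0 at +∞, and such that for every δ > 0, f_n converges uniformly on ℝ \ [-δ, δ] to the indicator function 1_{x ≤ 0}. Let (X_n) be real random variables such that for every r ∈ ℝ, E[f_n(X_n - r)] → p(r), where p is a continuous cumulative distribution function. Then X_n converges weakly in distribution to a random variable X with P(X ≤ r) = p(r). -/

import Mathlib

open MeasureTheory Filter Topology

lemma aux_integrable9 {Ω : Type*} [MeasurableSpace Ω] (μ : Measure Ω) [IsProbabilityMeasure μ]
    (g : ℝ → ℝ) (hmono : Antitone g) (hb : ∀ x, g x ∈ Set.Icc (0 : ℝ) 1)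
    (Y : Ω → ℝ) (hY : Measurable Y) : Integrable (fun ω => g (Y ω)) μ := by
  have hm : Measurable fun ω => g (Y ω) := hmono.measurable.comp hY
  refine (integrable_const (1 : ℝ)).mono' hm.aestronglyMeasurable ?_
  filter_upwards with ω
  have h := hb (Y ω)
  rw [Real.norm_eq_abs, abs_of_nonneg h.1]
  exact h.2

/-- Lemma 4.1.39 of Borodin–Corwin: if `f_n : ℝ → [0,1]` are strictly decreasing with
limits 1 at `-∞` and 0 at `+∞`, converging uniformly to `1_{x≤0}` away from any
neighborhood of `0`, and `E[f_n(X_n - r)] → p(r)` for a continuous CDF `p`, then the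
distribution functions of `X_n` converge to `p` pointwise (i.e. `X_n ⇒ X` with
`P(X ≤ r) = p(r)`). -/
theorem stmt9 {Ω : Type*} [MeasurableSpace Ω] (μ : Measure Ω) [IsProbabilityMeasure μ]
    (f : ℕ → ℝ → ℝ)
    (hrange : ∀ n x, f n x ∈ Set.Icc (0 : ℝ) 1)
    (hanti : ∀ n, StrictAnti (f n))
    (hlim_bot : ∀ n, Tendsto (f n) atBot (nhds 1))
    (hlim_top : ∀ n, Tendsto (f n) atTop (nhds 0))
    (hunif : ∀ δ > (0 : ℝ), TendstoUniformlyOn (fun n x => f n x)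
      (fun x => if x ≤ 0 then (1 : ℝ) else 0) atTop {x : ℝ | δ ≤ |x|})
    (X : ℕ → Ω → ℝ) (hX : ∀ n, Measurable (X n))
    (p : ℝ → ℝ)
    (hp_cont : Continuous p) (hp_mono : Monotone p)
    (hp_bot : Tendsto p atBot (nhds 0)) (hp_top : Tendsto p atTop (nhds 1))
    (hE : ∀ r : ℝ, Tendsto (fun n => ∫ ω, f n (X n ω - r) ∂μ) atTop (nhds (p r))) :
    ∀ r : ℝ, Tendsto (fun n => (μ {ω | X n ω ≤ r}).toReal) atTop (nhds (p r)) := by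
  intro r
  rw [Metric.tendsto_nhds]
  intro ε hε
  set ε' := ε / 4 with hε'def
  have hε' : 0 < ε' := by positivity
  -- continuity of p at r
  obtain ⟨δ, hδpos, hδp⟩ := Metric.continuousAt_iff.1 (hp_cont.continuousAt (x := r)) ε' hε'
  set δ' := δ / 2 with hδ'def
  have hδ'pos : 0 < δ' := by positivity
  have hp_up : p (r + δ') < p r + ε' := by
    have h := hδp (x := r + δ') (by
      rw [Real.dist_eq]
      have h0 : r + δ' - r = δ' := by ring
      rw [h0, abs_of_pos hδ'pos]; rw [hδ'def]; linarith)
    rw [Real.dist_eq] at h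
    have := abs_lt.1 h
    linarith
  have hp_down : p r - ε' < p (r - δ') := by
    have h := hδp (x := r - δ') (by
      rw [Real.dist_eq]
      have h0 : r - δ' - r = -δ' := by ring
      rw [h0, abs_neg, abs_of_pos hδ'pos]; rw [hδ'def]; linarith)
    rw [Real.dist_eq] at h
    have := abs_lt.1 h
    linarith
  have hu := (Metric.tendstoUniformlyOn_iff.1 (hunif δ' hδ'pos)) ε' hε'
  have h1 := (Metric.tendsto_nhds.1 (hE (r + δ'))) ε' hε'
  have h2 := (Metric.tendsto_nhds.1 (hE (r - δ'))) ε' hε'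
  filter_upwards [hu, h1, h2] with n hun hn1 hn2
  set A := {ω | X n ω ≤ r} with hAdef
  have hA : MeasurableSet A := measurableSet_le (hX n) measurable_const
  set P := (μ A).toReal with hPdef
  have hP0 : 0 ≤ P := ENNReal.toReal_nonneg
  have hP1 : P ≤ 1 := by
    have : μ A ≤ 1 := prob_le_one
    calc P ≤ (1 : ENNReal).toReal := ENNReal.toReal_mono ENNReal.one_ne_top this
      _ = 1 := by simp
  have hPc1 : (μ Aᶜ).toReal ≤ 1 := by
    have : μ Aᶜ ≤ 1 := prob_le_one
    calc (μ Aᶜ).toReal ≤ (1 : ENNReal).toReal := ENNReal.toReal_mono ENNReal.one_ne_top this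
      _ = 1 := by simp
  have hint1 : Integrable (fun ω => f n (X n ω - (r + δ'))) μ :=
    aux_integrable9 μ (f n) (hanti n).antitone (hrange n) _ ((hX n).sub measurable_const)
  have hint2 : Integrable (fun ω => f n (X n ω - (r - δ'))) μ :=
    aux_integrable9 μ (f n) (hanti n).antitone (hrange n) _ ((hX n).sub measurable_const)
  -- key lower bound for the expectation at r + δ'
  have key1 : (1 - ε') * P ≤ ∫ ω, f n (X n ω - (r + δ')) ∂μ := by
    have step : ∀ ω ∈ A, 1 - ε' ≤ f n (X n ω - (r + δ')) := by
      intro ω hω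
      have hω' : X n ω ≤ r := hω
      have hx : X n ω - (r + δ') ≤ -δ' := by linarith
      have hmem : δ' ≤ |X n ω - (r + δ')| := by
        rw [abs_of_nonpos (by linarith)]; linarith
      have hd := hun _ hmem
      rw [if_pos (by linarith : X n ω - (r + δ') ≤ 0), Real.dist_eq] at hd
      have := abs_lt.1 hd
      linarith
    calc (1 - ε') * P = ∫ _ω in A, (1 - ε') ∂μ := by
          rw [setIntegral_const]; rw [smul_eq_mul]; rw [Measure.real_def, ← hPdef]; ring
      _ ≤ ∫ ω in A, f n (X n ω - (r + δ')) ∂μ :=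
          setIntegral_mono_on (integrable_const _).integrableOn hint1.integrableOn hA step
      _ ≤ ∫ ω, f n (X n ω - (r + δ')) ∂μ :=
          setIntegral_le_integral hint1 (Filter.Eventually.of_forall fun ω => (hrange n _).1)
  -- key upper bound for the expectation at r - δ'
  have key2 : ∫ ω, f n (X n ω - (r - δ')) ∂μ ≤ P + ε' := by
    have hsplit := integral_add_compl hA hint2
    have keyA : ∫ ω in A, f n (X n ω - (r - δ')) ∂μ ≤ P := by
      calc ∫ ω in A, f n (X n ω - (r - δ')) ∂μ ≤ ∫ _ω in A, (1 : ℝ) ∂μ :=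
            setIntegral_mono_on hint2.integrableOn (integrable_const _).integrableOn hA
              (fun ω _ => (hrange n _).2)
        _ = P := by rw [setIntegral_const]; simp; rw [Measure.real_def, hPdef]
    have keyAc : ∫ ω in Aᶜ, f n (X n ω - (r - δ')) ∂μ ≤ ε' := by
      have step : ∀ ω ∈ Aᶜ, f n (X n ω - (r - δ')) ≤ ε' := by
        intro ω hω
        have hω' : r < X n ω := lt_of_not_ge hω
        have hx : δ' < X n ω - (r - δ') := by linarith
        have hmem : δ' ≤ |X n ω - (r - δ')| := by
          rw [abs_of_pos (by linarith)]; linarith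
        have hd := hun _ hmem
        rw [if_neg (by push_neg; linarith : ¬ X n ω - (r - δ') ≤ 0), Real.dist_eq] at hd
        have := abs_lt.1 hd
        linarith
      calc ∫ ω in Aᶜ, f n (X n ω - (r - δ')) ∂μ ≤ ∫ _ω in Aᶜ, ε' ∂μ :=
            setIntegral_mono_on hint2.integrableOn (integrable_const _).integrableOn hA.compl step
        _ = (μ Aᶜ).toReal * ε' := by rw [setIntegral_const]; rw [smul_eq_mul]; rw [Measure.real_def]
        _ ≤ 1 * ε' := by
            exact mul_le_mul_of_nonneg_right hPc1 hε'.le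
        _ = ε' := one_mul _
    linarith
  -- finish
  rw [Real.dist_eq, abs_lt]
  rw [Real.dist_eq] at hn1 hn2
  have hb1 := abs_lt.1 hn1
  have hb2 := abs_lt.1 hn2
  have up : P < p r + ε := by nlinarith
  have down : p r - ε < P := by nlinarith
  constructor <;> linarith
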